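/- Let H be a Hilbert space and φ an endomorphism of H. Then φ is a bounded finite potent endomorphism if and only if H admits a decomposition H = W ⊕ U where W and U are closed φ-invariant subspaces, W is finite-dimensional, φ restricted to W is a homeomorphism of W, and φ restricted to U is a bounded nilpotent operator. -/

import Mathlib

open LinearMap Submodule

private lemma continuous_pow_aux {H : Type*} [NormedAddCommGroup H]
    [InnerProductSpace ℂ H] (φ : H →ₗ[ℂ] H) (hc : Continuous ⇑φ) (k : ℕ) :
    Continuous ⇑(φ ^ k) := by
  induction k with
  | zero => simpa [Module.End.coe_one] using continuous_id
  | succ n ih =>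
    have : (φ ^ (n + 1)) = φ.comp (φ ^ n) := by rw [pow_succ']; rfl
    rw [this]
    exact hc.comp ih

/-- Characterization: `φ` is a bounded finite potent endomorphism iff `H = W ⊕ U` with
`W`, `U` closed `φ`-invariant, `W` finite-dimensional, `φ|_W` a (linear) homeomorphism
of `W`, and `φ|_U` a bounded nilpotent operator. -/
theorem bounded_finite_potent_characterization {H : Type*} [NormedAddCommGroup H]
    [InnerProductSpace ℂ H] [CompleteSpace H] (φ : H →ₗ[ℂ] H) :
    (Continuous ⇑φ ∧ ∃ n : ℕ, FiniteDimensional ℂ (LinearMap.range (φ ^ n))) ↔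
    ∃ (W U : Submodule ℂ H) (hW : ∀ x ∈ W, φ x ∈ W) (hU : ∀ x ∈ U, φ x ∈ U),
      IsClosed (W : Set H) ∧ IsClosed (U : Set H) ∧ IsCompl W U ∧
      FiniteDimensional ℂ W ∧
      (∃ e : W ≃L[ℂ] W, ∀ w : W, e w = φ.restrict hW w) ∧
      Continuous ⇑(φ.restrict hU) ∧ IsNilpotent (φ.restrict hU) := by
  constructor
  · rintro ⟨hcont, n, hfin⟩
    -- ranges form a decreasing chain
    have hle : ∀ k l : ℕ, k ≤ l → LinearMap.range (φ ^ l) ≤ LinearMap.range (φ ^ k) := by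
      intro k l hkl
      obtain ⟨j, rfl⟩ := Nat.exists_eq_add_of_le hkl
      rw [pow_add]
      exact LinearMap.range_comp_le_range _ _
    haveI hfins : ∀ k : ℕ, FiniteDimensional ℂ (LinearMap.range (φ ^ (n + k))) := fun k =>
      Submodule.finiteDimensional_of_le (hle n (n + k) (Nat.le_add_right n k))
    -- stabilization
    have key : ∃ m : ℕ, n ≤ m ∧ LinearMap.range (φ ^ (m + 1)) = LinearMap.range (φ ^ m) := by
      by_contra hcon
      push_neg at hcon
      have hlt : ∀ k : ℕ, LinearMap.range (φ ^ (n + k + 1)) < LinearMap.range (φ ^ (n + k)) :=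
        fun k => lt_of_le_of_ne (hle _ _ (Nat.le_succ _))
          (hcon (n + k) (Nat.le_add_right n k))
      have hrank : ∀ k : ℕ,
          Module.finrank ℂ (LinearMap.range (φ ^ (n + k))) + k ≤
            Module.finrank ℂ (LinearMap.range (φ ^ n)) := by
        intro k
        induction k with
        | zero => simp
        | succ j ih =>
          have h1 := Submodule.finrank_lt_finrank_of_lt (hlt j)
          have : n + j + 1 = n + (j + 1) := by ring
          rw [this] at h1
          omega
      have := hrank (Module.finrank ℂ (LinearMap.range (φ ^ n)) + 1)
      omega
    obtain ⟨m, hnm, hm⟩ := key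
    -- all later ranges agree
    have hstab : ∀ j : ℕ, LinearMap.range (φ ^ (m + j)) = LinearMap.range (φ ^ m) := by
      intro j
      induction j with
      | zero => rfl
      | succ j ih =>
        have h1 : (φ ^ (m + j + 1)) = φ.comp (φ ^ (m + j)) := by rw [pow_succ']; rfl
        have h2 : (φ ^ (m + 1)) = φ.comp (φ ^ m) := by rw [pow_succ']; rfl
        calc LinearMap.range (φ ^ (m + (j + 1)))
            = Submodule.map φ (LinearMap.range (φ ^ (m + j))) := by
              rw [show m + (j + 1) = m + j + 1 from rfl, h1, LinearMap.range_comp]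
          _ = Submodule.map φ (LinearMap.range (φ ^ m)) := by rw [ih]
          _ = LinearMap.range (φ ^ (m + 1)) := by rw [h2, LinearMap.range_comp]
          _ = LinearMap.range (φ ^ m) := hm
    set W := LinearMap.range (φ ^ m) with hWdef
    set U := LinearMap.ker (φ ^ m) with hUdef
    haveI hfinW : FiniteDimensional ℂ W :=
      Submodule.finiteDimensional_of_le (hle n m hnm)
    have hWinv : ∀ x ∈ W, φ x ∈ W := by
      rintro x ⟨y, rfl⟩
      rw [← hm]
      exact ⟨y, by rw [pow_succ']; rfl⟩
    have hUinv : ∀ x ∈ U, φ x ∈ U := by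
      intro x hx
      have hx' : (φ ^ m) x = 0 := hx
      show (φ ^ m) (φ x) = 0
      have : (φ ^ m).comp φ = φ.comp (φ ^ m) := by
        rw [← Module.End.mul_eq_comp, ← Module.End.mul_eq_comp, ← pow_succ, ← pow_succ']
      calc (φ ^ m) (φ x) = ((φ ^ m).comp φ) x := rfl
        _ = φ ((φ ^ m) x) := by rw [this]; rfl
        _ = 0 := by rw [hx', map_zero]
    have hcm : Continuous ⇑(φ ^ m) := continuous_pow_aux φ hcont m
    have hUclosed : IsClosed (U : Set H) := by
      have : (U : Set H) = (φ ^ m) ⁻¹' {0} := by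
        ext x; simp [hUdef, LinearMap.mem_ker]
      rw [this]
      exact isClosed_singleton.preimage hcm
    have hWclosed : IsClosed (W : Set H) := W.closed_of_finiteDimensional
    -- φ restricted to W is bijective
    set ψ := φ.restrict hWinv with hψdef
    have hψsurj : Function.Surjective ψ := by
      rintro ⟨w, hw⟩
      rw [← hm] at hw
      obtain ⟨y, hy⟩ := hw
      have hy' : (φ ^ m) y ∈ W := ⟨y, rfl⟩
      refine ⟨⟨(φ ^ m) y, hy'⟩, ?_⟩
      apply Subtype.ext
      show φ ((φ ^ m) y) = w
      rw [← hy, pow_succ']; rfl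
    have hψinj : Function.Injective ψ :=
      (LinearMap.injective_iff_surjective).2 hψsurj
    have hψbij : Function.Bijective ψ := ⟨hψinj, hψsurj⟩
    have hψpow : ∀ (x : W) (k : ℕ), ((ψ ^ k) x : H) = (φ ^ k) (x : H) := by
      intro x k
      rw [hψdef, Module.End.pow_restrict]
      rfl
    refine ⟨W, U, hWinv, hUinv, hWclosed, hUclosed, ?_, hfinW, ?_, ?_, ?_⟩
    · -- IsCompl
      constructor
      · rw [disjoint_def]
        intro x hxW hxU
        have hx0 : (φ ^ m) x = 0 := hxU
        have h1 : ((ψ ^ m) ⟨x, hxW⟩ : H) = 0 := by rw [hψpow]; exact hx0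
        have h2 : (ψ ^ m) ⟨x, hxW⟩ = 0 := Subtype.ext h1
        have hinj : Function.Injective ⇑(ψ ^ m) := by
          rw [Module.End.coe_pow]
          exact hψinj.iterate m
        have : (⟨x, hxW⟩ : W) = 0 := hinj (by rw [h2, map_zero])
        simpa using congrArg Subtype.val this
      · rw [codisjoint_iff_le_sup]
        intro x _
        have hxm : (φ ^ m) x ∈ LinearMap.range (φ ^ (m + m)) := by
          rw [hstab m]; exact ⟨x, rfl⟩
        obtain ⟨y, hy⟩ := hxm
        have hWy : (φ ^ m) y ∈ W := ⟨y, rfl⟩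
        have hUy : x - (φ ^ m) y ∈ U := by
          show (φ ^ m) (x - (φ ^ m) y) = 0
          rw [map_sub]
          have : (φ ^ m) ((φ ^ m) y) = (φ ^ (m + m)) y := by rw [pow_add]; rfl
          rw [this, hy, sub_self]
        exact Submodule.mem_sup.2 ⟨(φ ^ m) y, hWy, x - (φ ^ m) y, hUy, by abel⟩
    · -- homeomorphism on W
      let eLin : W ≃ₗ[ℂ] W := LinearEquiv.ofBijective ψ hψbij
      exact ⟨eLin.toContinuousLinearEquiv, fun w => rfl⟩
    · -- continuity on U
      have : ⇑(φ.restrict hUinv) = fun x : U => (⟨φ (x : H), hUinv _ x.2⟩ : U) := rfl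
      rw [this]
      exact (hcont.comp continuous_subtype_val).subtype_mk _
    · -- nilpotency on U
      refine ⟨m, ?_⟩
      ext x
      have h1 : (((φ.restrict hUinv) ^ m) x : H) = (φ ^ m) (x : H) := by
        rw [Module.End.pow_restrict]; rfl
      have h2 : (φ ^ m) (x : H) = 0 := x.2
      rw [h1, h2]; rfl
  · rintro ⟨W, U, hW, hU, hWc, hUc, hcompl, hfinW, ⟨e, he⟩, hcontU, k, hk⟩
    constructor
    · -- continuity of φ
      let P := W.linearProjOfClosedCompl U hcompl hWc hUc
      let Q := U.linearProjOfClosedCompl W hcompl.symm hUc hWc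
      have hφ : ⇑φ = fun x =>
          ((φ.restrict hW (W.projectionOnto U hcompl x) : H) +
           (φ.restrict hU (U.projectionOnto W hcompl.symm x) : H)) := by
        funext x
        rw [LinearMap.restrict_coe_apply, LinearMap.restrict_coe_apply, ← map_add]
        exact congrArg φ (Submodule.projection_add_projection_eq_self hcompl x).symm
      have hcontW : Continuous ⇑(φ.restrict hW) :=
        LinearMap.continuous_of_finiteDimensional _
      have hP : Continuous ⇑(W.projectionOnto U hcompl) := by
        rw [← Submodule.coe_continuous_linearProjOfClosedCompl' hcompl hWc hUc]
        exact P.continuous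
      have hQ : Continuous ⇑(U.projectionOnto W hcompl.symm) := by
        rw [← Submodule.coe_continuous_linearProjOfClosedCompl' hcompl.symm hUc hWc]
        exact Q.continuous
      rw [hφ]
      exact ((continuous_subtype_val.comp (hcontW.comp hP)).add
        (continuous_subtype_val.comp (hcontU.comp hQ)))
    · -- finite potency
      refine ⟨k, ?_⟩
      have hrange : LinearMap.range (φ ^ k) ≤ W := by
        rw [LinearMap.range_eq_map, ← hcompl.codisjoint.eq_top, Submodule.map_sup]
        apply sup_le
        · rintro y ⟨x, hx, rfl⟩
          exact Module.End.pow_apply_mem_of_forall_mem k hW x hx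
        · rintro y ⟨x, hx, rfl⟩
          have h1 : (((φ.restrict hU) ^ k) ⟨x, hx⟩ : H) = (φ ^ k) x := by
            rw [Module.End.pow_restrict]; rfl
          rw [hk] at h1
          simp only [LinearMap.zero_apply, ZeroMemClass.coe_zero] at h1
          rw [← h1]
          exact W.zero_mem
      exact Submodule.finiteDimensional_of_le hrange
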